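/- arXiv:2309.07446 — 2 statements merged into one kernel-verified Lean document; each statement's English description precedes it below -/
import Mathlib

section
/- Let d > N ≥ 1 with d - N > 1 and T = (d-N)·d^{-d/(d-N)}. Every eigenvalue λ of multiplication by ((d-N)/d)·X on ℂ[X]/(X^{d-1} - d^{-N}X^{N-1}) satisfies |λ| ≤ T, the eigenvalues of modulus T are exactly {T·e^{2πij/(d-N)} : j = 0,…,d-N-1}, and each eigenvalue of modulus T has multiplicity one. -/
open Polynomial

set_option maxHeartbeats 1000000 in
theorem stmt14 (N d : ℕ) (hN : 1 ≤ N) (hd : N + 1 < d) :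
    let p : Polynomial ℂ := X ^ (d - 1) - C (((d : ℂ) ^ N)⁻¹) * X ^ (N - 1)
    let f : Module.End ℂ (AdjoinRoot p) :=
      LinearMap.mulLeft ℂ ((((d : ℂ) - N) / d) • AdjoinRoot.root p)
    let T : ℝ := ((d : ℝ) - N) * (d : ℝ) ^ (-(d : ℝ) / ((d : ℝ) - N))
    (∀ μ : ℂ, f.HasEigenvalue μ → ‖μ‖ ≤ T) ∧
      (∀ μ : ℂ, (f.HasEigenvalue μ ∧ ‖μ‖ = T) ↔
        ∃ j < d - N, μ = (T : ℂ) * Complex.exp (2 * Real.pi * Complex.I * j / ((d : ℂ) - N))) ∧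
      ∀ μ : ℂ, f.HasEigenvalue μ → ‖μ‖ = T →
        Module.finrank ℂ (f.maxGenEigenspace μ) = 1 := by
  intro p f T
  have hNd : N < d := by omega
  set n := d - N with hn
  have hn2 : 2 ≤ n := by omega
  have hn0 : n ≠ 0 := by omega
  have hd1 : d - 1 = (N - 1) + n := by omega
  have hN1 : N - 1 < d - 1 := by omega
  have hd0 : 0 < d := by omega
  -- casts
  have hdR : (0:ℝ) < (d:ℝ) := by exact_mod_cast hd0
  have hdNR : ((d:ℝ) - N) = (n : ℝ) := by push_cast [hn, Nat.cast_sub hNd.le]; ring_nf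
  have hnRpos : (0:ℝ) < (n:ℝ) := by exact_mod_cast Nat.pos_of_ne_zero hn0
  have hdNC : ((d:ℂ) - N) = (n : ℂ) := by push_cast [hn, Nat.cast_sub hNd.le]; ring_nf
  have hdC : (d:ℂ) ≠ 0 := by exact_mod_cast hd0.ne'
  have hdNC0 : ((d:ℂ) - N) ≠ 0 := by rw [hdNC]; exact_mod_cast hn0
  -- T
  have hTpos : 0 < T := by
    apply mul_pos (by rw [hdNR]; exact hnRpos) (Real.rpow_pos_of_pos hdR _)
  -- constants
  set a : ℂ := ((d : ℂ) ^ N)⁻¹ with ha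
  set c : ℂ := ((d:ℂ) - N) / d with hc
  have hc0 : c ≠ 0 := div_ne_zero hdNC0 hdC
  set b : ℂ := c ^ n * a with hb
  -- b = T^n
  have hbT : b = ((T ^ n : ℝ) : ℂ) := by
    have h1 : ((d:ℝ) ^ (-(d:ℝ) / ((d:ℝ) - N))) ^ n = ((d:ℝ) ^ d)⁻¹ := by
      rw [← Real.rpow_natCast ((d:ℝ) ^ (-(d:ℝ) / ((d:ℝ) - N))) n, ← Real.rpow_mul hdR.le,
        hdNR, div_mul_cancel₀ _ (ne_of_gt hnRpos), Real.rpow_neg hdR.le, Real.rpow_natCast]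
    have h2 : T ^ n = ((d:ℝ) - N) ^ n * ((d:ℝ) ^ d)⁻¹ := by
      rw [mul_pow, h1]
    have h3 : (d:ℝ) ^ d = (d:ℝ) ^ n * (d:ℝ) ^ N := by
      rw [← pow_add]; congr 1; omega
    rw [h2, h3, hb, hc, ha]
    have hdRne : (d:ℝ) ≠ 0 := hdR.ne'
    push_cast
    field_simp
    rw [← mul_pow, div_mul_cancel₀ _ hdC]
  have hbR : (0:ℝ) < T ^ n := pow_pos hTpos n
  have hb0 : b ≠ 0 := by rw [hbT]; exact_mod_cast hbR.ne'
  -- p monic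
  have hpmonic : p.Monic := by
    apply monic_X_pow_sub
    refine lt_of_le_of_lt (degree_C_mul_X_pow_le _ _) ?_
    exact_mod_cast hN1
  have hpdeg : p.natDegree = d - 1 := by
    have : (C a * X ^ (N-1)).natDegree < (X ^ (d-1) : ℂ[X]).natDegree := by
      rw [natDegree_X_pow]
      exact lt_of_le_of_lt (natDegree_C_mul_le _ _) (by rw [natDegree_X_pow]; exact hN1)
    rw [show p = X ^ (d-1) - C a * X ^ (N-1) from rfl, natDegree_sub_eq_left_of_natDegree_lt this,
      natDegree_X_pow]
  -- instances
  haveI : Module.Finite ℂ (AdjoinRoot p) :=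
    Module.Finite.of_basis (AdjoinRoot.powerBasis' hpmonic).basis
  have hfinrank : Module.finrank ℂ (AdjoinRoot p) = d - 1 := by
    rw [(AdjoinRoot.powerBasis' hpmonic).finrank, AdjoinRoot.powerBasis'_dim, hpdeg]
  haveI : Nontrivial (AdjoinRoot p) := by
    apply Module.nontrivial_of_finrank_pos (R := ℂ)
    rw [hfinrank]; omega
  -- y
  set r := AdjoinRoot.root p with hr
  set y : AdjoinRoot p := c • r with hy
  set q : ℂ[X] := X ^ (d - 1) - C b * X ^ (N - 1) with hq
  have hqmonic : q.Monic := by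
    apply monic_X_pow_sub
    refine lt_of_le_of_lt (degree_C_mul_X_pow_le _ _) ?_
    exact_mod_cast hN1
  have hqdeg : q.natDegree = d - 1 := by
    have : (C b * X ^ (N-1)).natDegree < (X ^ (d-1) : ℂ[X]).natDegree := by
      rw [natDegree_X_pow]
      exact lt_of_le_of_lt (natDegree_C_mul_le _ _) (by rw [natDegree_X_pow]; exact hN1)
    rw [hq, natDegree_sub_eq_left_of_natDegree_lt this, natDegree_X_pow]
  -- root relation
  have hrrel : r ^ (d-1) = algebraMap ℂ _ a * r ^ (N-1) := by
    have h0 : aeval r p = 0 := by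
      rw [hr, AdjoinRoot.aeval_eq, AdjoinRoot.mk_self]
    have : r ^ (d-1) - algebraMap ℂ _ a * r ^ (N-1) = 0 := by
      simpa [p, map_sub, map_mul, aeval_X_pow, aeval_C] using h0
    exact sub_eq_zero.mp this
  -- q(y) = 0
  have haev : aeval y q = 0 := by
    have h1 : (aeval y) q = y ^ (d-1) - algebraMap ℂ _ b * y ^ (N-1) := by
      simp [hq]
    rw [h1, hy, _root_.smul_pow, _root_.smul_pow, Algebra.smul_def, Algebra.smul_def, hrrel,
      ← mul_assoc, ← map_mul, ← mul_assoc, ← map_mul, sub_eq_zero]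
    congr 1
    rw [hd1, pow_add, hb]; ring
  have hint : IsIntegral ℂ y := IsIntegral.of_finite ℂ y
  have hmindvd : minpoly ℂ y ∣ q := minpoly.dvd ℂ y haev
  have hmindeg : d - 1 ≤ (minpoly ℂ y).natDegree := by
    set m := minpoly ℂ y with hm
    have hm0 : m ≠ 0 := minpoly.ne_zero hint
    set g : ℂ[X] := m.comp (C c * X) with hgdef
    have hg0 : g ≠ 0 := by
      intro h
      rcases comp_eq_zero_iff.mp h with h' | ⟨_, h'⟩
      · exact hm0 h'
      · have h'' := congrArg (fun t : ℂ[X] => t.coeff 1) h'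
        simp at h''
        exact hc0 h''
    have haevg : aeval r g = 0 := by
      rw [hgdef, aeval_comp]
      have hcy : aeval r (C c * X : ℂ[X]) = y := by
        simp [hy, Algebra.smul_def]
      rw [hcy]
      exact minpoly.aeval ℂ y
    have hpg : p ∣ g := by
      rw [← AdjoinRoot.mk_eq_zero, ← AdjoinRoot.aeval_eq]; exact haevg
    have hle := natDegree_le_of_dvd hpg hg0
    rwa [hpdeg, hgdef, natDegree_comp, natDegree_C_mul_X c hc0, mul_one] at hle
  have hminy : minpoly ℂ y = q :=
    (eq_of_monic_of_dvd_of_natDegree_le (minpoly.monic hint) hqmonic hmindvd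
      (by rw [hqdeg]; exact hmindeg)).symm
  have hfy : f = Algebra.lmul ℂ (AdjoinRoot p) y := rfl
  have hminf : minpoly ℂ f = q := by
    rw [hfy, minpoly.algHom_eq _ Algebra.lmul_injective y, hminy]
  have heig : ∀ μ : ℂ, f.HasEigenvalue μ ↔ q.IsRoot μ := by
    intro μ; rw [Module.End.hasEigenvalue_iff_isRoot, hminf]
  have hroot_iff : ∀ μ : ℂ, q.IsRoot μ ↔ μ ^ (N-1) * (μ ^ n - b) = 0 := by
    intro μ
    have hev : eval μ q = μ ^ (N-1) * (μ ^ n - b) := by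
      simp only [hq, eval_sub, eval_mul, eval_pow, eval_C, eval_X]
      rw [hd1, pow_add]; ring
    rw [IsRoot.def, hev]
  have habs : ∀ μ : ℂ, μ ^ n = b → ‖μ‖ = T := by
    intro μ hμ
    have h1 : (‖μ‖) ^ n = T ^ n := by
      rw [← norm_pow, hμ, hbT, Complex.norm_real, Real.norm_of_nonneg hbR.le]
    exact (pow_left_inj₀ (norm_nonneg μ) hTpos.le hn0).mp h1
  have hcases : ∀ μ : ℂ, f.HasEigenvalue μ → μ = 0 ∨ μ ^ n = b := by
    intro μ hμ
    rcases mul_eq_zero.mp ((hroot_iff μ).mp ((heig μ).mp hμ)) with h | h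
    · left
      exact (pow_eq_zero_iff'.mp h).1
    · right; exact sub_eq_zero.mp h
  refine ⟨?_, ?_, ?_⟩
  · -- part 1
    intro μ hμ
    rcases hcases μ hμ with h | h
    · rw [h]; simpa using hTpos.le
    · rw [habs μ h]
  · -- part 2
    intro μ
    constructor
    · rintro ⟨hμ, habsT⟩
      have hμ0 : μ ≠ 0 := by
        intro h; rw [h, norm_zero] at habsT; exact hTpos.ne' habsT.symm
      have hμn : μ ^ n = b := by
        rcases hcases μ hμ with h | h
        · exact absurd h hμ0
        · exact h
      have hT0 : (T : ℂ) ≠ 0 := by exact_mod_cast hTpos.ne'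
      set u : ℂ := μ / T with hu
      have hun : u ^ n = 1 := by
        rw [hu, div_pow, hμn, hbT]
        push_cast
        exact div_self (by exact_mod_cast (pow_pos hTpos n).ne')
      haveI : NeZero n := ⟨hn0⟩
      obtain ⟨j, hj, hju⟩ := (Complex.isPrimitiveRoot_exp n hn0).eq_pow_of_pow_eq_one hun
      refine ⟨j, by omega, ?_⟩
      have : μ = (T : ℂ) * u := by
        rw [hu, mul_div_cancel₀ _ hT0]
      rw [this, ← hju, ← Complex.exp_nat_mul]
      congr 1
      rw [hdNC]
      field_simp
    · rintro ⟨j, hj, rfl⟩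
      have hθ : 2 * (Real.pi : ℂ) * Complex.I * j / ((d:ℂ) - N)
          = ((2 * Real.pi * j / n : ℝ) : ℂ) * Complex.I := by
        rw [hdNC]
        push_cast
        field_simp
      have habs1 : ‖(Complex.exp (2 * (Real.pi : ℂ) * Complex.I * j / ((d:ℂ) - N)))‖ = 1 := by
        rw [hθ, Complex.norm_exp_ofReal_mul_I]
      have habsμ : ‖((T : ℂ) * Complex.exp (2 * (Real.pi:ℂ) * Complex.I * j / ((d:ℂ) - N)))‖ = T := by
        rw [norm_mul, habs1, mul_one, Complex.norm_real, Real.norm_of_nonneg hTpos.le]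
      refine ⟨?_, habsμ⟩
      -- eigenvalue
      have hnC : ((n:ℂ)) ≠ 0 := by exact_mod_cast hn0
      have hexp : (Complex.exp (2 * (Real.pi:ℂ) * Complex.I * j / ((d:ℂ) - N))) ^ n = 1 := by
        rw [← Complex.exp_nat_mul]
        have : (n : ℂ) * (2 * (Real.pi:ℂ) * Complex.I * j / ((d:ℂ) - N)) = (j : ℕ) * (2 * (Real.pi:ℂ) * Complex.I) := by
          rw [hdNC]; field_simp
        rw [this, Complex.exp_nat_mul, Complex.exp_two_pi_mul_I, one_pow]
      have hμn : ((T:ℂ) * Complex.exp (2 * (Real.pi:ℂ) * Complex.I * j / ((d:ℂ) - N))) ^ n = b := by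
        rw [mul_pow, hexp, mul_one, hbT]
        push_cast
        ring
      rw [heig, hroot_iff, hμn, sub_self, mul_zero]
  · -- part 3
    intro μ hμ habsT
    have hμ0 : μ ≠ 0 := by
      intro h; rw [h, norm_zero] at habsT; exact hTpos.ne habsT
    have hroot : q.IsRoot μ := (heig μ).mp hμ
    set g : Module.End ℂ (AdjoinRoot p) := f - μ • 1 with hgdef
    have hgl : g = Algebra.lmul ℂ (AdjoinRoot p) (y - algebraMap ℂ _ μ) := by
      ext x
      simp [hgdef, hfy, sub_mul, Algebra.smul_def]
    have hintg : IsIntegral ℂ (y - algebraMap ℂ (AdjoinRoot p) μ) := IsIntegral.of_finite ℂ _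
    have hming : minpoly ℂ g = q.comp (X + C μ) := by
      rw [hgl, minpoly.algHom_eq _ Algebra.lmul_injective, minpoly.sub_algebraMap, hminy]
    have hcompdeg : (q.comp (X + C μ)).natDegree = d - 1 := by
      rw [natDegree_comp, natDegree_X_add_C, mul_one, hqdeg]
    have hcharg : g.charpoly = q.comp (X + C μ) := by
      have h1 : q.comp (X + C μ) ∣ g.charpoly := by
        rw [← hming]; exact LinearMap.minpoly_dvd_charpoly g
      exact (eq_of_monic_of_dvd_of_natDegree_le (hqmonic.comp_X_add_C μ)
        (LinearMap.charpoly_monic g) h1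
        (by rw [LinearMap.charpoly_natDegree, hfinrank, hcompdeg]))
    have hspace : f.maxGenEigenspace μ = g.maxGenEigenspace 0 := by
      ext x
      simp only [Module.End.mem_maxGenEigenspace, zero_smul, sub_zero, hgdef]
    rw [hspace, LinearMap.finrank_maxGenEigenspace_zero_eq, hcharg, ← rootMultiplicity_eq_natTrailingDegree]
    have hμn : μ ^ n = b := by
      rcases mul_eq_zero.mp ((hroot_iff μ).mp hroot) with h | h
      · exact absurd (pow_eq_zero_iff'.mp h).1 hμ0
      · exact sub_eq_zero.mp h
    have hqfact : q = X ^ (N-1) * (X ^ n - C b) := by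
      rw [hq, mul_sub, ← pow_add, ← hd1]; ring
    have hs0 : (X ^ n - C b : ℂ[X]) ≠ 0 := X_pow_sub_C_ne_zero (by omega) b
    rw [hqfact, rootMultiplicity_mul (mul_ne_zero (pow_ne_zero _ X_ne_zero) hs0)]
    have h1 : rootMultiplicity μ (X ^ (N-1) : ℂ[X]) = 0 := by
      apply rootMultiplicity_eq_zero
      simp only [IsRoot.def, eval_pow, eval_X]
      exact pow_ne_zero _ hμ0
    have h2 : rootMultiplicity μ (X ^ n - C b : ℂ[X]) = 1 := by
      have hsep := separable_X_pow_sub_C b (F := ℂ) (n := n) (by exact_mod_cast hn0) hb0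
      have hle := rootMultiplicity_le_one_of_separable hsep μ
      have hpos : 0 < rootMultiplicity μ (X ^ n - C b : ℂ[X]) := by
        rw [rootMultiplicity_pos hs0]
        simp only [IsRoot.def, eval_sub, eval_pow, eval_X, eval_C]
        rw [hμn, sub_self]
      omega
    rw [h1, h2]
end

section
/- Let d, w_1,…,w_N be positive integers with ν = d - Σ w_j > 0, and define, for m in the narrow set Nar, the numbers ρ_{𝒩(m)} = 1/d + 1 - m/d (where 𝒩 enumerates Nar in increasing order, ρ_0 = 1) and the multiset {α_i} obtained from {1/d + k/w_j : 1≤j≤N, 0≤k≤w_j-1} by deleting (n+1)/d once for each n ∈ {0,…,d-1}\Nar. Then Σ_{h=1}^p α_h - Σ_{h=1}^q ρ_h = -ν(1/2 + 1/d) + (3-N)/2, where p and q+1 = |Nar| are the cardinalities of {α_i} and {ρ_0,…,ρ_q}. -/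
theorem stmt17 (N d : ℕ) (hd : 2 ≤ d) (w : Fin N → ℕ) (hw : ∀ j, 0 < w j)
    (hsum : ∑ j, w j < d) :
    let Nar := (Finset.range d).filter (fun m => 0 < m ∧ ∀ j, ¬ d ∣ w j * m)
    let nonNar := (Finset.range d).filter (fun m => ¬(0 < m ∧ ∀ j, ¬ d ∣ w j * m))
    let sumα : ℚ := (∑ j, ∑ k ∈ Finset.range (w j), ((1 : ℚ) / d + (k : ℚ) / (w j)))
      - ∑ n ∈ nonNar, ((n : ℚ) + 1) / d
    let sumρ : ℚ := (∑ m ∈ Nar, ((1 : ℚ) / d + 1 - (m : ℚ) / d)) - 1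
    sumα - sumρ
      = -(((d : ℚ) - ∑ j, (w j : ℚ)) * ((1 : ℚ) / 2 + 1 / d)) + (3 - (N : ℚ)) / 2 := by
  intro Nar nonNar sumα sumρ
  have hd0 : (0:ℚ) < (d:ℚ) := by positivity
  have hdQ : (d:ℚ) ≠ 0 := ne_of_gt hd0
  -- symmetry of Nar under m ↦ d - m
  have hmap : ∀ m ∈ Nar, d - m ∈ Nar := by
    intro m hm
    simp only [Nar, Finset.mem_filter, Finset.mem_range] at hm ⊢
    obtain ⟨hmd, hm0, hnd⟩ := hm
    refine ⟨by omega, by omega, ?_⟩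
    intro j hdvd
    apply hnd j
    have h2 : d ∣ w j * d := Dvd.intro (w j) (mul_comm _ _)
    have h3 : d ∣ w j * d - w j * (d - m) := Nat.dvd_sub h2 hdvd
    have h4 : w j * d - w j * (d - m) = w j * m := by
      have h5 : w j * (d - m) + w j * m = w j * d := by
        rw [← Nat.mul_add]; congr 1; omega
      omega
    rwa [h4] at h3
  -- key symmetry identity: 2 * ∑ m ∈ Nar, m = d * Nar.card
  have hsymm : ∑ m ∈ Nar, (m : ℕ) = ∑ m ∈ Nar, (d - m) := by
    apply Finset.sum_nbij' (fun m => d - m) (fun m => d - m)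
      (fun m hm => hmap m hm) (fun m hm => hmap m hm)
    · intro m hm
      simp only [Nar, Finset.mem_filter, Finset.mem_range] at hm
      omega
    · intro m hm
      simp only [Nar, Finset.mem_filter, Finset.mem_range] at hm
      omega
    · intro m hm
      simp only [Nar, Finset.mem_filter, Finset.mem_range] at hm
      omega
  have hkey : 2 * ∑ m ∈ Nar, (m : ℕ) = d * Nar.card := by
    have hle : ∀ m ∈ Nar, m ≤ d := by
      intro m hm
      simp only [Nar, Finset.mem_filter, Finset.mem_range] at hm
      omega
    have h1 : ∑ m ∈ Nar, (m : ℕ) + ∑ m ∈ Nar, (d - m) = ∑ m ∈ Nar, d := by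
      rw [← Finset.sum_add_distrib]
      apply Finset.sum_congr rfl
      intro m hm; have := hle m hm; omega
    rw [Finset.sum_const, smul_eq_mul, mul_comm] at h1
    omega
  have hkeyQ : 2 * ∑ m ∈ Nar, (m : ℚ) = (d : ℚ) * Nar.card := by
    have := congrArg (fun n : ℕ => (n : ℚ)) hkey
    push_cast at this
    linarith
  -- split the range d sum
  have hsplit : ∑ m ∈ Nar, ((m : ℚ) + 1) / d + ∑ n ∈ nonNar, ((n : ℚ) + 1) / d
      = ∑ n ∈ Finset.range d, ((n : ℚ) + 1) / d :=
    Finset.sum_filter_add_sum_filter_not _ _ _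
  -- Gauss sum
  have hgauss : ∑ n ∈ Finset.range d, (n : ℚ) = d * (d - 1) / 2 := by
    have h := Finset.sum_range_id_mul_two d
    have h' := congrArg (fun n : ℕ => (n : ℚ)) h
    push_cast [Nat.cast_sub (by omega : 1 ≤ d)] at h'
    linarith
  have hranged : ∑ n ∈ Finset.range d, ((n : ℚ) + 1) / d = ((d:ℚ) + 1) / 2 := by
    simp only [add_div]
    rw [Finset.sum_add_distrib, ← Finset.sum_div, hgauss, Finset.sum_const,
      Finset.card_range, nsmul_eq_mul]
    field_simp
    ring
  -- inner sums
  have hinner : ∀ j, ∑ k ∈ Finset.range (w j), ((1 : ℚ) / d + (k : ℚ) / (w j))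
      = (w j : ℚ) / d + ((w j : ℚ) - 1) / 2 := by
    intro j
    have hwj : (0:ℚ) < (w j : ℚ) := by exact_mod_cast hw j
    have hwjne : (w j : ℚ) ≠ 0 := ne_of_gt hwj
    have hg : ∑ k ∈ Finset.range (w j), (k : ℚ) = (w j) * ((w j) - 1) / 2 := by
      have h := Finset.sum_range_id_mul_two (w j)
      have h' := congrArg (fun n : ℕ => (n : ℚ)) h
      push_cast [Nat.cast_sub (hw j)] at h'
      linarith
    rw [Finset.sum_add_distrib, Finset.sum_const, Finset.card_range, nsmul_eq_mul,
      ← Finset.sum_div, hg]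
    field_simp
  -- assemble
  show sumα - sumρ = _
  have hα : sumα = (∑ j, ((w j : ℚ) / d + ((w j : ℚ) - 1) / 2))
      - (((d:ℚ) + 1) / 2 - ∑ m ∈ Nar, ((m : ℚ) + 1) / d) := by
    simp only [sumα]
    rw [Finset.sum_congr rfl (fun j _ => hinner j)]
    rw [← hranged, ← hsplit]
    ring
  have hρsum : ∑ m ∈ Nar, ((1 : ℚ) / d + 1 - (m : ℚ) / d)
      = (Nar.card : ℚ) / d + Nar.card - (∑ m ∈ Nar, (m : ℚ)) / d := by
    rw [Finset.sum_sub_distrib, Finset.sum_add_distrib, Finset.sum_const, Finset.sum_const,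
      ← Finset.sum_div, nsmul_eq_mul, nsmul_eq_mul, mul_one]
    ring
  have hnarplus : ∑ m ∈ Nar, ((m : ℚ) + 1) / d
      = (∑ m ∈ Nar, (m : ℚ)) / d + (Nar.card : ℚ) / d := by
    simp only [add_div]
    rw [Finset.sum_add_distrib, ← Finset.sum_div, Finset.sum_const, nsmul_eq_mul]
    ring
  have hsumdist : ∑ j, ((w j : ℚ) / d + ((w j : ℚ) - 1) / 2)
      = (∑ j, (w j : ℚ)) / d + ((∑ j, (w j : ℚ)) - N) / 2 := by
    rw [Finset.sum_add_distrib, ← Finset.sum_div, ← Finset.sum_div, Finset.sum_sub_distrib,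
      Finset.sum_const, Finset.card_univ, Fintype.card_fin, nsmul_eq_mul, mul_one]
  rw [hα, hnarplus]
  simp only [sumρ, hρsum]
  rw [hsumdist]
  set M := ∑ m ∈ Nar, (m : ℚ)
  set C := (Nar.card : ℚ)
  set S := ∑ j, (w j : ℚ)
  field_simp
  linear_combination (2 : ℚ) * hkeyQ
end
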